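/- C_k(S,v,∞) is an [n+1,k,n−k+2]_q MDS code (i.e., its minimum distance equals n−k+2) if and only if S is k-zero-sum free. -/

import Mathlib

open Polynomial Finset

noncomputable section

/-- Hamming weight of a vector. -/
def wt {F : Type*} [Field F] {N : ℕ} (w : Fin N → F) : ℕ := Set.ncard {i | w i ≠ 0}

/-- The code `C_k(S,v,∞)` as a set of vectors of length `n+1`. -/
def codeSet {F : Type*} [Field F] {n : ℕ} (a v : Fin n → F) (k : ℕ) :
    Set (Fin (n + 1) → F) :=
  {w | ∃ f : F[X], f.natDegree ≤ k ∧ f.coeff (k - 1) = 0 ∧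
    w = Fin.snoc (fun i => v i * f.eval (a i)) (f.coeff k)}

/-- The Euclidean dual of a set of vectors. -/
def dualSet {F : Type*} [Field F] {N : ℕ} (C : Set (Fin N → F)) : Set (Fin N → F) :=
  {y | ∀ x ∈ C, ∑ i, x i * y i = 0}

/-- A (nonzero) code has minimum distance `d`: some nonzero codeword has weight `d`
and every nonzero codeword has weight at least `d`. -/
def IsMinDist {F : Type*} [Field F] {N : ℕ} (C : Set (Fin N → F)) (d : ℕ) : Prop :=
  (∃ w ∈ C, w ≠ 0 ∧ wt w = d) ∧ ∀ w ∈ C, w ≠ 0 → d ≤ wt w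

/-- `u i = ∏_{j ≠ i} (a i - a j)⁻¹`. -/
def uCoeff {F : Type*} [Field F] {n : ℕ} (a : Fin n → F) (i : Fin n) : F :=
  ∏ j ∈ Finset.univ.erase i, (a i - a j)⁻¹

/-- The set of Schur (componentwise) products of elements of two codes. -/
def schurSet {F : Type*} [Field F] {N : ℕ} (C D : Set (Fin N → F)) : Set (Fin N → F) :=
  {w | ∃ c ∈ C, ∃ d ∈ D, w = c * d}

/-! ### Auxiliary lemmas -/

open Classical in
lemma wt_snoc {F : Type*} [Field F] {n : ℕ} (g : Fin n → F) (c : F) :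
    wt (Fin.snoc g c) = Set.ncard {i | g i ≠ 0} + if c ≠ 0 then 1 else 0 := by
  classical
  rw [wt, Set.ncard_eq_toFinset_card', Set.ncard_eq_toFinset_card']
  simp only [Set.toFinset_setOf]
  rw [Finset.card_filter, Finset.card_filter, Fin.sum_univ_castSucc]
  simp [Fin.snoc_castSucc, Fin.snoc_last]

lemma card_zeros_le {F : Type*} [Field F] {n : ℕ} {f : F[X]} (hf : f ≠ 0)
    {a : Fin n → F} (ha : Function.Injective a)
    {Z : Finset (Fin n)} (hroot : ∀ i ∈ Z, f.eval (a i) = 0) : Z.card ≤ f.natDegree := by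
  classical
  rw [← Finset.card_image_of_injective Z ha]
  apply Polynomial.card_le_degree_of_subset_roots
  intro x hx
  rw [Finset.mem_val, Finset.mem_image] at hx
  obtain ⟨i, hi, rfl⟩ := hx
  rw [Polynomial.mem_roots hf]
  exact hroot i hi

lemma sum_eq_zero_of_roots {F : Type*} [Field F] {n : ℕ} {f : F[X]}
    {a : Fin n → F} (ha : Function.Injective a)
    {Z : Finset (Fin n)} (hroot : ∀ i ∈ Z, f.eval (a i) = 0) (hf : f ≠ 0)
    (hdeg : f.natDegree = Z.card) (hpos : 0 < Z.card)
    (hcoeff : f.coeff (Z.card - 1) = 0) : ∑ i ∈ Z, a i = 0 := by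
  classical
  set p : F[X] := ∏ i ∈ Z, (X - C (a i)) with hp
  have hmonic : p.Monic := monic_prod_of_monic _ _ fun i _ => monic_X_sub_C _
  have hpdeg : p.natDegree = Z.card := by
    rw [hp, natDegree_prod _ _ fun i _ => X_sub_C_ne_zero (a i)]
    simp
  have hdvd : p ∣ f := by
    have h1 : (Z.val.map a) ≤ f.roots := by
      rw [Multiset.le_iff_subset (Z.nodup.map ha)]
      intro x hx
      rw [Multiset.mem_map] at hx
      obtain ⟨i, hi, rfl⟩ := hx
      rw [Polynomial.mem_roots hf]
      exact hroot i (Finset.mem_val.mp hi)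
    have h2 := (Multiset.prod_X_sub_C_dvd_iff_le_roots hf (Z.val.map a)).mpr h1
    rw [Multiset.map_map] at h2
    rw [hp, Finset.prod_eq_multiset_prod]
    simpa using h2
  obtain ⟨q, hq⟩ := hdvd
  have hq0 : q ≠ 0 := by rintro rfl; simp at hq; exact hf hq
  have hqdeg : q.natDegree = 0 := by
    have := natDegree_mul hmonic.ne_zero hq0
    rw [← hq, hdeg, hpdeg] at this
    omega
  obtain ⟨c, rfl⟩ := Polynomial.natDegree_eq_zero.mp hqdeg
  have hc0 : c ≠ 0 := by rintro rfl; simp at hq; exact hf hq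
  have hpc : p.coeff (Z.card - 1) = -∑ i ∈ Z, a i := by
    rw [hp]
    exact Polynomial.prod_X_sub_C_coeff_card_pred Z a hpos
  rw [hq, Polynomial.coeff_mul_C, hpc] at hcoeff
  rcases mul_eq_zero.mp hcoeff with h | h
  · exact neg_eq_zero.mp h
  · exact absurd h hc0

theorem stmt3 {F : Type*} [Field F] [Fintype F] (n k : ℕ)
    (hk3 : 3 ≤ k) (hkn : k + 2 ≤ n) (hnq : n ≤ Fintype.card F)
    (a : Fin n → F) (ha : Function.Injective a)
    (v : Fin n → F) (hv : ∀ i, v i ≠ 0) :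
    IsMinDist (codeSet a v k) (n - k + 2) ↔
      ∀ T : Finset (Fin n), T.card = k → ∑ i ∈ T, a i ≠ 0 := by
  classical
  have hkn' : k ≤ n := by omega
  constructor
  · rintro ⟨-, hmin⟩ T hT hsum
    set f : F[X] := ∏ i ∈ T, (X - C (a i)) with hf
    have hmonic : f.Monic := monic_prod_of_monic _ _ fun i _ => monic_X_sub_C _
    have hfdeg : f.natDegree = k := by
      rw [hf, natDegree_prod _ _ fun i _ => X_sub_C_ne_zero (a i)]
      simp [hT]
    have heval : ∀ j, f.eval (a j) = 0 ↔ j ∈ T := by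
      intro j
      rw [hf, eval_prod]
      simp only [eval_sub, eval_X, eval_C]
      rw [Finset.prod_eq_zero_iff]
      constructor
      · rintro ⟨i, hi, hzero⟩
        rw [sub_eq_zero] at hzero
        rwa [ha hzero]
      · intro hj; exact ⟨j, hj, sub_self _⟩
    have hcoeff1 : f.coeff (k - 1) = 0 := by
      have h1 := Polynomial.prod_X_sub_C_coeff_card_pred T a (by rw [hT]; omega)
      rw [hT, hsum, neg_zero] at h1
      rw [hf]; exact h1
    have hck : f.coeff k = 1 := by
      have := hmonic.coeff_natDegree
      rwa [hfdeg] at this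
    have hmem : Fin.snoc (fun i => v i * f.eval (a i)) (f.coeff k) ∈ codeSet a v k :=
      ⟨f, le_of_eq hfdeg, hcoeff1, rfl⟩
    have hne : (Fin.snoc (fun i => v i * f.eval (a i)) (f.coeff k) : Fin (n+1) → F) ≠ 0 := by
      intro h
      have h2 := congrFun h (Fin.last n)
      rw [Fin.snoc_last] at h2
      rw [hck] at h2
      exact one_ne_zero h2
    have hle := hmin _ hmem hne
    rw [wt_snoc] at hle
    have hset : {i : Fin n | v i * f.eval (a i) ≠ 0} = (↑(Finset.univ \ T) : Set (Fin n)) := by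
      ext i
      simp [mul_ne_zero_iff, hv i, heval i]
    rw [hset, Set.ncard_coe_finset, Finset.card_sdiff_of_subset (Finset.subset_univ T),
      Finset.card_univ, Fintype.card_fin, hT, hck, if_pos one_ne_zero] at hle
    omega
  · intro hfree
    constructor
    · -- existence of a codeword of weight n - k + 2
      obtain ⟨T, -, hT⟩ := Finset.exists_subset_card_eq (s := (Finset.univ : Finset (Fin n))) (n := k - 2)
        (by simp; omega)
      set f : F[X] := ∏ i ∈ T, (X - C (a i)) with hf
      have hmonic : f.Monic := monic_prod_of_monic _ _ fun i _ => monic_X_sub_C _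
      have hfdeg : f.natDegree = k - 2 := by
        rw [hf, natDegree_prod _ _ fun i _ => X_sub_C_ne_zero (a i)]
        simp [hT]
      have heval : ∀ j, f.eval (a j) = 0 ↔ j ∈ T := by
        intro j
        rw [hf, eval_prod]
        simp only [eval_sub, eval_X, eval_C]
        rw [Finset.prod_eq_zero_iff]
        constructor
        · rintro ⟨i, hi, hzero⟩
          rw [sub_eq_zero] at hzero
          rwa [ha hzero]
        · intro hj; exact ⟨j, hj, sub_self _⟩
      have hc1 : f.coeff (k - 1) = 0 :=
        Polynomial.coeff_eq_zero_of_natDegree_lt (by omega)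
      have hck : f.coeff k = 0 :=
        Polynomial.coeff_eq_zero_of_natDegree_lt (by omega)
      refine ⟨Fin.snoc (fun i => v i * f.eval (a i)) (f.coeff k),
        ⟨f, by omega, hc1, rfl⟩, ?_, ?_⟩
      · -- nonzero: pick i ∉ T
        obtain ⟨i, hi⟩ : ∃ i, i ∉ T := by
          by_contra h
          push_neg at h
          have : T = Finset.univ := Finset.eq_univ_iff_forall.mpr h
          rw [this, Finset.card_univ, Fintype.card_fin] at hT
          omega
        intro h
        have h2 := congrFun h (Fin.castSucc i)
        rw [Fin.snoc_castSucc] at h2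
        exact (mul_ne_zero (hv i) ((not_iff_not.mpr (heval i)).mpr hi)) h2
      · rw [wt_snoc]
        have hset : {i : Fin n | v i * f.eval (a i) ≠ 0} = (↑(Finset.univ \ T) : Set (Fin n)) := by
          ext i
          simp [mul_ne_zero_iff, hv i, heval i]
        rw [hset, Set.ncard_coe_finset, Finset.card_sdiff_of_subset (Finset.subset_univ T),
          Finset.card_univ, Fintype.card_fin, hT, hck]
        simp
        omega
    · -- lower bound
      rintro w ⟨f, hdeg, hc1, rfl⟩ hwne
      have hfne : f ≠ 0 := by
        rintro rfl
        apply hwne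
        funext i
        refine Fin.lastCases ?_ ?_ i
        · simp [Fin.snoc_last]
        · intro j; simp [Fin.snoc_castSucc]
      rw [wt_snoc]
      set Z := Finset.univ.filter (fun i => f.eval (a i) = 0) with hZ
      have hroot : ∀ i ∈ Z, f.eval (a i) = 0 := fun i hi => (Finset.mem_filter.mp hi).2
      have hZle : Z.card ≤ f.natDegree := card_zeros_le hfne ha hroot
      have hset : {i : Fin n | v i * f.eval (a i) ≠ 0} = (↑(Finset.univ \ Z) : Set (Fin n)) := by
        ext i
        simp [hZ, mul_ne_zero_iff, hv i]
      rw [hset, Set.ncard_coe_finset, Finset.card_sdiff_of_subset (Finset.subset_univ Z),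
        Finset.card_univ, Fintype.card_fin]
      by_cases hck : f.coeff k = 0
      · have hd1 : f.natDegree ≠ k := by
          intro h
          exact hfne (Polynomial.leadingCoeff_eq_zero.mp (by rw [Polynomial.leadingCoeff, h]; exact hck))
        have hd2 : f.natDegree ≠ k - 1 := by
          intro h
          exact hfne (Polynomial.leadingCoeff_eq_zero.mp (by rw [Polynomial.leadingCoeff, h]; exact hc1))
        have hZ2 : Z.card ≤ k - 2 := by omega
        have hZn : Z.card ≤ n := Finset.card_le_card (Finset.subset_univ Z) |>.trans (by simp)
        rw [if_neg (by simpa using hck)]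
        omega
      · have hdeqk : f.natDegree = k := le_antisymm hdeg (Polynomial.le_natDegree_of_ne_zero hck)
        rw [if_pos hck]
        by_cases hZk : Z.card = k
        · exfalso
          apply hfree Z hZk
          apply sum_eq_zero_of_roots ha hroot hfne (hdeqk.trans hZk.symm) (by omega)
          rw [hZk]; exact hc1
        · omega

end
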